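/- Let V be a finite set and let E be a set of elementary triplets over V satisfying ci0, ci1 and ci2. Then the independence model m(E) satisfies CI2: for all pairwise disjoint I,J,K,L ⊆ V, if I⊥J|K∪L ∈ m(E) and I⊥K|J∪L ∈ m(E), then I⊥J|L ∈ m(E) and I⊥K|L ∈ m(E). -/
import Mathlib


variable {V : Type*} [DecidableEq V]

/-- CI2 (intersection): for all pairwise disjoint `I J K L`,
`(I ⊥ J | K ∪ L ∈ M and I ⊥ K | J ∪ L ∈ M) → (I ⊥ J | L ∈ M and I ⊥ K | L ∈ M)`. -/
def CI2 (M : Set (Finset V × Finset V × Finset V)) : Prop :=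
  ∀ I J K L : Finset V, Disjoint I J → Disjoint I K → Disjoint I L →
    Disjoint J K → Disjoint J L → Disjoint K L →
    ((I, J, K ∪ L) ∈ M ∧ (I, K, J ∪ L) ∈ M) → ((I, J, L) ∈ M ∧ (I, K, L) ∈ M)

/-- ci0: for all distinct `i j` and `L ⊆ V \ {i, j}`, `i ⊥ j | L ∈ E ↔ j ⊥ i | L ∈ E`. -/
def ci0 (E : Set (V × V × Finset V)) : Prop :=
  ∀ (i j : V) (L : Finset V), i ≠ j → i ∉ L → j ∉ L →
    ((i, j, L) ∈ E ↔ (j, i, L) ∈ E)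

/-- ci1: for all distinct `i j k` and `L ⊆ V \ {i, j, k}`,
`(i ⊥ j | {k} ∪ L ∈ E and i ⊥ k | L ∈ E) ↔ (i ⊥ k | {j} ∪ L ∈ E and i ⊥ j | L ∈ E)`. -/
def ci1 (E : Set (V × V × Finset V)) : Prop :=
  ∀ (i j k : V) (L : Finset V), i ≠ j → i ≠ k → j ≠ k → i ∉ L → j ∉ L → k ∉ L →
    (((i, j, insert k L) ∈ E ∧ (i, k, L) ∈ E) ↔
      ((i, k, insert j L) ∈ E ∧ (i, j, L) ∈ E))

/-- ci2: for all distinct `i j k` and `L ⊆ V \ {i, j, k}`,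
`(i ⊥ j | {k} ∪ L ∈ E and i ⊥ k | {j} ∪ L ∈ E) → (i ⊥ j | L ∈ E and i ⊥ k | L ∈ E)`. -/
def ci2 (E : Set (V × V × Finset V)) : Prop :=
  ∀ (i j k : V) (L : Finset V), i ≠ j → i ≠ k → j ≠ k → i ∉ L → j ∉ L → k ∉ L →
    ((i, j, insert k L) ∈ E ∧ (i, k, insert j L) ∈ E) →
      ((i, j, L) ∈ E ∧ (i, k, L) ∈ E)

/-- `m(E)`: the triplets `I ⊥ J | K` (with `I`, `J`, `K` pairwise disjoint) such that
`i ⊥ j | M' ∈ E` for all `i ∈ I`, `j ∈ J` and all `M'` with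
`K ⊆ M' ⊆ (I \ {i}) ∪ (J \ {j}) ∪ K`. -/
def mMap (E : Set (V × V × Finset V)) : Set (Finset V × Finset V × Finset V) :=
  { T | Disjoint T.1 T.2.1 ∧ Disjoint T.1 T.2.2 ∧ Disjoint T.2.1 T.2.2 ∧
      ∀ i ∈ T.1, ∀ j ∈ T.2.1, ∀ M' : Finset V, T.2.2 ⊆ M' →
        M' ⊆ T.1.erase i ∪ T.2.1.erase j ∪ T.2.2 → (i, j, M') ∈ E }

lemma key_lemma (E : Set (V × V × Finset V)) (h2 : ci2 E)
    (I J K L : Finset V) (hIJ : Disjoint I J) (hIK : Disjoint I K)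
    (hJK : Disjoint J K)
    (hA : ∀ i ∈ I, ∀ j ∈ J, ∀ M : Finset V, K ∪ L ⊆ M →
      M ⊆ I.erase i ∪ J.erase j ∪ (K ∪ L) → (i, j, M) ∈ E)
    (hB : ∀ i ∈ I, ∀ k ∈ K, ∀ M : Finset V, J ∪ L ⊆ M →
      M ⊆ I.erase i ∪ K.erase k ∪ (J ∪ L) → (i, k, M) ∈ E) :
    ∀ n (M : Finset V), ((J ∪ K) \ M).card ≤ n → L ⊆ M → M ⊆ I ∪ J ∪ K ∪ L →
      ∀ i ∈ I, i ∉ M →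
      (∀ j ∈ J, j ∉ M → (i, j, M) ∈ E) ∧ (∀ k ∈ K, k ∉ M → (i, k, M) ∈ E) := by
  intro n
  induction n with
  | zero =>
    intro M hcard hLM hM i hi hiM
    have hsub : J ∪ K ⊆ M := by
      intro x hx
      by_contra hxM
      have : x ∈ (J ∪ K) \ M := Finset.mem_sdiff.mpr ⟨hx, hxM⟩
      have := Finset.card_pos.mpr ⟨x, this⟩
      omega
    constructor
    · intro j hj hjM
      exact absurd (hsub (Finset.mem_union_left _ hj)) hjM
    · intro k hk hkM
      exact absurd (hsub (Finset.mem_union_right _ hk)) hkM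
  | succ n ih =>
    intro M hcard hLM hM i hi hiM
    have hdec : ∀ x ∈ J ∪ K, x ∉ M → ((J ∪ K) \ insert x M).card ≤ n := by
      intro x hx hxM
      have hxmem : x ∈ (J ∪ K) \ M := Finset.mem_sdiff.mpr ⟨hx, hxM⟩
      have : (J ∪ K) \ insert x M = ((J ∪ K) \ M).erase x := by
        ext y
        simp only [Finset.mem_sdiff, Finset.mem_erase, Finset.mem_insert]
        tauto
      rw [this, Finset.card_erase_of_mem hxmem]
      have := Finset.card_pos.mpr ⟨x, hxmem⟩
      omega
    constructor
    · -- case (a): j ∈ J, j ∉ M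
      intro j hj hjM
      by_cases hKM : K ⊆ M
      · apply hA i hi j hj M (Finset.union_subset hKM hLM)
        intro x hx
        have hxm := hM hx
        have hxi : x ≠ i := fun h => hiM (h ▸ hx)
        have hxj : x ≠ j := fun h => hjM (h ▸ hx)
        simp only [Finset.mem_union, Finset.mem_erase] at hxm ⊢
        tauto
      · obtain ⟨x, hxK, hxM⟩ := Finset.not_subset.mp hKM
        have hix : i ≠ x := fun h => Finset.disjoint_left.mp hIK hi (h ▸ hxK)
        have hjx : j ≠ x := fun h => Finset.disjoint_left.mp hJK hj (h ▸ hxK)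
        have hij : i ≠ j := fun h => Finset.disjoint_left.mp hIJ hi (h ▸ hj)
        have h1' := ih (insert x M) (hdec x (Finset.mem_union_right _ hxK) hxM)
          (hLM.trans (Finset.subset_insert _ _))
          (by
            intro y hy
            rcases Finset.mem_insert.mp hy with rfl | hy
            · exact Finset.mem_union_left _ (Finset.mem_union_right _ hxK)
            · exact hM hy)
          i hi (by simp [Finset.mem_insert, hix, hiM])
        have h2' := ih (insert j M) (hdec j (Finset.mem_union_left _ hj) hjM)
          (hLM.trans (Finset.subset_insert _ _))
          (by
            intro y hy
            rcases Finset.mem_insert.mp hy with rfl | hy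
            · exact Finset.mem_union_left _ (Finset.mem_union_left _ (Finset.mem_union_right _ hj))
            · exact hM hy)
          i hi (by simp [Finset.mem_insert, hij, hiM])
        have e1 : (i, j, insert x M) ∈ E :=
          h1'.1 j hj (by simp [Finset.mem_insert, hjx, hjM])
        have e2 : (i, x, insert j M) ∈ E :=
          h2'.2 x hxK (by simp [Finset.mem_insert, hjx.symm, hxM])
        exact (h2 i j x M hij hix hjx hiM hjM hxM ⟨e1, e2⟩).1
    · -- case (b): k ∈ K, k ∉ M
      intro k hk hkM
      by_cases hJM : J ⊆ M
      · apply hB i hi k hk M (Finset.union_subset hJM hLM)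
        intro x hx
        have hxm := hM hx
        have hxi : x ≠ i := fun h => hiM (h ▸ hx)
        have hxk : x ≠ k := fun h => hkM (h ▸ hx)
        simp only [Finset.mem_union, Finset.mem_erase] at hxm ⊢
        tauto
      · obtain ⟨x, hxJ, hxM⟩ := Finset.not_subset.mp hJM
        have hix : i ≠ x := fun h => Finset.disjoint_left.mp hIJ hi (h ▸ hxJ)
        have hkx : k ≠ x := fun h => Finset.disjoint_left.mp hJK (h ▸ hxJ) hk
        have hik : i ≠ k := fun h => Finset.disjoint_left.mp hIK hi (h ▸ hk)
        have h1' := ih (insert x M) (hdec x (Finset.mem_union_left _ hxJ) hxM)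
          (hLM.trans (Finset.subset_insert _ _))
          (by
            intro y hy
            rcases Finset.mem_insert.mp hy with rfl | hy
            · exact Finset.mem_union_left _ (Finset.mem_union_left _ (Finset.mem_union_right _ hxJ))
            · exact hM hy)
          i hi (by simp [Finset.mem_insert, hix, hiM])
        have h2' := ih (insert k M) (hdec k (Finset.mem_union_right _ hk) hkM)
          (hLM.trans (Finset.subset_insert _ _))
          (by
            intro y hy
            rcases Finset.mem_insert.mp hy with rfl | hy
            · exact Finset.mem_union_left _ (Finset.mem_union_right _ hk)
            · exact hM hy)
          i hi (by simp [Finset.mem_insert, hik, hiM])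
        have e1 : (i, k, insert x M) ∈ E :=
          h1'.2 k hk (by simp [Finset.mem_insert, hkx, hkM])
        have e2 : (i, x, insert k M) ∈ E :=
          h2'.1 x hxJ (by simp [Finset.mem_insert, hkx.symm, hxM])
        exact (h2 i k x M hik hix hkx hiM hkM hxM ⟨e1, e2⟩).1

/-- If a set `E` of elementary triplets over a finite set `V` satisfies
ci0, ci1 and ci2, then `m(E)` satisfies CI2. -/
theorem mMap_CI2_of_ci012 [Fintype V] (E : Set (V × V × Finset V))
    (hE : ∀ T ∈ E, T.1 ≠ T.2.1 ∧ T.1 ∉ T.2.2 ∧ T.2.1 ∉ T.2.2)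
    (h0 : ci0 E) (h1 : ci1 E) (h2 : ci2 E) :
    CI2 (mMap E) := by
  intro I J K L hIJ hIK hIL hJK hJL hKL ⟨hm1, hm2⟩
  obtain ⟨_, _, _, hA⟩ := hm1
  obtain ⟨_, _, _, hB⟩ := hm2
  simp only at hA hB
  have key := key_lemma E h2 I J K L hIJ hIK hJK hA hB ((J ∪ K) \ L).card
  constructor
  · refine ⟨hIJ, hIL, hJL, ?_⟩
    intro i hi j hj M' hLM hMsub
    have hiM : i ∉ M' := by
      intro hiM
      have := hMsub hiM
      simp only [Finset.mem_union, Finset.mem_erase] at this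
      rcases this with (⟨hne, _⟩ | ⟨_, hmem⟩) | hmem
      · exact hne rfl
      · exact Finset.disjoint_left.mp hIJ hi hmem
      · exact Finset.disjoint_left.mp hIL hi hmem
    have hjM : j ∉ M' := by
      intro hjM
      have := hMsub hjM
      simp only [Finset.mem_union, Finset.mem_erase] at this
      rcases this with (⟨_, hmem⟩ | ⟨hne, _⟩) | hmem
      · exact Finset.disjoint_left.mp hIJ (hmem) hj
      · exact hne rfl
      · exact Finset.disjoint_left.mp hJL hj hmem
    have hMsub' : M' ⊆ I ∪ J ∪ K ∪ L := by
      intro x hx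
      have := hMsub hx
      simp only [Finset.mem_union, Finset.mem_erase] at this ⊢
      tauto
    have hcard : ((J ∪ K) \ M').card ≤ ((J ∪ K) \ L).card :=
      Finset.card_le_card (fun x hx => by
        simp only [Finset.mem_sdiff] at hx ⊢
        exact ⟨hx.1, fun h => hx.2 (hLM h)⟩)
    exact (key M' hcard hLM hMsub' i hi hiM).1 j hj hjM
  · refine ⟨hIK, hIL, hKL, ?_⟩
    intro i hi k hk M' hLM hMsub
    have hiM : i ∉ M' := by
      intro hiM
      have := hMsub hiM
      simp only [Finset.mem_union, Finset.mem_erase] at this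
      rcases this with (⟨hne, _⟩ | ⟨_, hmem⟩) | hmem
      · exact hne rfl
      · exact Finset.disjoint_left.mp hIK hi hmem
      · exact Finset.disjoint_left.mp hIL hi hmem
    have hkM : k ∉ M' := by
      intro hkM
      have := hMsub hkM
      simp only [Finset.mem_union, Finset.mem_erase] at this
      rcases this with (⟨_, hmem⟩ | ⟨hne, _⟩) | hmem
      · exact Finset.disjoint_left.mp hIK hmem hk
      · exact hne rfl
      · exact Finset.disjoint_left.mp hKL hk hmem
    have hMsub' : M' ⊆ I ∪ J ∪ K ∪ L := by
      intro x hx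
      have := hMsub hx
      simp only [Finset.mem_union, Finset.mem_erase] at this ⊢
      tauto
    have hcard : ((J ∪ K) \ M').card ≤ ((J ∪ K) \ L).card :=
      Finset.card_le_card (fun x hx => by
        simp only [Finset.mem_sdiff] at hx ⊢
        exact ⟨hx.1, fun h => hx.2 (hLM h)⟩)
    exact (key M' hcard hLM hMsub' i hi hiM).2 k hk hkM
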